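/- Let E ∈ ℝ_{≥0}^{r×d} be a cone generator matrix for S, i.e. ker(S) ∩ ℝ_{≥0}^r = {Eλ : λ ∈ ℝ_{≥0}^d}. Then the positive steady state variety V⁺ is nonempty if and only if E has no zero row. -/
import Mathlib


open Matrix

noncomputable section

/-- The monomial map φ: `phi Y x j = ∏ i, x i ^ Y i j`. -/
def phi {n r : ℕ} (Y : Matrix (Fin n) (Fin r) ℕ) (x : Fin n → ℝ) : Fin r → ℝ :=
  fun j => ∏ i, x i ^ Y i j

/-- The positive steady state variety V⁺. -/
def Vplus {n r : ℕ} (Y : Matrix (Fin n) (Fin r) ℕ) (S : Matrix (Fin n) (Fin r) ℝ) :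
    Set ((Fin r → ℝ) × (Fin n → ℝ)) :=
  {p | (∀ j, 0 < p.1 j) ∧ (∀ i, 0 < p.2 i) ∧
    S.mulVec (fun j => p.1 j * phi Y p.2 j) = 0}

/-- `E` is a cone generator matrix for `S`:
`E` is nonnegative and `ker S ∩ ℝ_{≥0}^r = {Eλ : λ ≥ 0}`. -/
def IsConeGenMatrix {n r d : ℕ} (S : Matrix (Fin n) (Fin r) ℝ)
    (E : Matrix (Fin r) (Fin d) ℝ) : Prop :=
  (∀ j l, 0 ≤ E j l) ∧
  {v : Fin r → ℝ | S.mulVec v = 0 ∧ ∀ j, 0 ≤ v j} =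
    {v : Fin r → ℝ | ∃ lam : Fin d → ℝ, (∀ l, 0 ≤ lam l) ∧ v = E.mulVec lam}

/-- The coefficient cone Λ(E). -/
def Lambda {r d : ℕ} (E : Matrix (Fin r) (Fin d) ℝ) : Set (Fin d → ℝ) :=
  {lam | (∀ l, 0 ≤ lam l) ∧ ∀ j, 0 < E.mulVec lam j}

/-- `ξ^B`: for a rational `q × m` matrix `B`, `(ξ^B) j = ∏ i, ξ i ^ (B i j)` (real powers). -/
def vecPow {q m : ℕ} (ξ : Fin q → ℝ) (B : Matrix (Fin q) (Fin m) ℚ) : Fin m → ℝ :=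
  fun j => ∏ i, ξ i ^ ((B i j : ℝ))

/-- V⁺ admits a monomial parametrization with exponent matrix `A` (data `p`, `A`, `K`, `ψ`). -/
def IsMonomialParamExp {n r : ℕ} (Y : Matrix (Fin n) (Fin r) ℕ)
    (S : Matrix (Fin n) (Fin r) ℝ) (p : ℕ) (A : Matrix (Fin (n - p)) (Fin n) ℚ)
    (K : Set (Fin r → ℝ)) (ψ : (Fin r → ℝ) → (Fin n → ℝ)) : Prop :=
  p < n ∧ A.rank = n - p ∧ (∀ k ∈ K, ∀ j, 0 < k j) ∧ (∀ k ∈ K, ∀ i, 0 < ψ k i) ∧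
  ∀ k x, (∀ j : Fin r, 0 < k j) → (∀ i : Fin n, 0 < x i) →
    ((k, x) ∈ Vplus Y S ↔ k ∈ K ∧
      ∃ ξ : Fin (n - p) → ℝ, (∀ l, 0 < ξ l) ∧ x = fun i => ψ k i * vecPow ξ A i)

/-- `Z` is a conservation matrix for `S` (with `s = rank S`):
its rows form a basis of the left kernel of `S`. -/
def IsConservationMatrix {n r : ℕ} (S : Matrix (Fin n) (Fin r) ℝ) (s : ℕ)
    (Z : Matrix (Fin (n - s)) (Fin n) ℝ) : Prop :=
  S.rank = s ∧ s < n ∧ LinearIndependent ℝ (fun i => Z i) ∧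
    Submodule.span ℝ (Set.range (fun i => Z i)) = LinearMap.ker S.vecMulLinear

/-- `im₊(Z) = {Zx : x ≥ 0}`. -/
def imPos {m n : ℕ} (Z : Matrix (Fin m) (Fin n) ℝ) : Set (Fin m → ℝ) :=
  {c | ∃ x : Fin n → ℝ, (∀ i, 0 ≤ x i) ∧ c = Z.mulVec x}

/-- The real row space of a rational matrix. -/
def rowSpace {q m : ℕ} (A : Matrix (Fin q) (Fin m) ℚ) : Submodule ℝ (Fin m → ℝ) :=
  Submodule.span ℝ (Set.range (fun l => fun i => ((A l i : ℝ))))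

/-- The column space (image) of `S`. -/
def colSpace {n r : ℕ} (S : Matrix (Fin n) (Fin r) ℝ) : Submodule ℝ (Fin n → ℝ) :=
  LinearMap.range S.mulVecLin

/-- Componentwise sign of a vector. -/
def signVec {m : ℕ} (v : Fin m → ℝ) : Fin m → ℝ := fun i => Real.sign (v i)

/-- V⁺ is nonempty iff the cone generator matrix E has no zero row. -/
theorem Vplus_nonempty_iff_no_zero_row {n r d : ℕ} (hn : 1 ≤ n) (hr : 1 ≤ r)
    (Y : Matrix (Fin n) (Fin r) ℕ) (S : Matrix (Fin n) (Fin r) ℝ)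
    (E : Matrix (Fin r) (Fin d) ℝ) (hE : IsConeGenMatrix S E) :
    (Vplus Y S).Nonempty ↔ ∀ j, ∃ l, E j l ≠ 0 := by
  obtain ⟨hEnn, hker⟩ := hE
  constructor
  · rintro ⟨⟨k, x⟩, hk, hx, hS⟩
    have hvpos : ∀ j, 0 < k j * phi Y x j := by
      intro j
      refine mul_pos (hk j) ?_
      unfold phi
      exact Finset.prod_pos fun i _ => pow_pos (hx i) _
    have hvmem : (fun j => k j * phi Y x j) ∈
        {v : Fin r → ℝ | S.mulVec v = 0 ∧ ∀ j, 0 ≤ v j} :=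
      ⟨hS, fun j => (hvpos j).le⟩
    rw [hker] at hvmem
    obtain ⟨lam, hlam, hveq⟩ := hvmem
    intro j
    by_contra h
    push_neg at h
    have hzero : k j * phi Y x j = 0 := by
      have := congrFun hveq j
      rw [this]
      simp [Matrix.mulVec, dotProduct, h]
    exact (hvpos j).ne' hzero
  · intro h
    set v := E.mulVec (fun _ => 1) with hv
    have hvpos : ∀ j, 0 < v j := by
      intro j
      obtain ⟨l, hl⟩ := h j
      have hpos : 0 < E j l * 1 := by
        rw [mul_one]
        exact lt_of_le_of_ne (hEnn j l) (Ne.symm hl)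
      exact Finset.sum_pos' (fun i _ => mul_nonneg (hEnn j i) zero_le_one)
        ⟨l, Finset.mem_univ l, hpos⟩
    have hvmem : v ∈ {v : Fin r → ℝ | S.mulVec v = 0 ∧ ∀ j, 0 ≤ v j} := by
      rw [hker]
      exact ⟨fun _ => 1, fun _ => zero_le_one, rfl⟩
    refine ⟨(v, fun _ => 1), hvpos, fun _ => one_pos, ?_⟩
    have heq : (fun j => v j * phi Y (fun _ => 1) j) = v := by
      funext j; simp [phi]
    rw [heq]
    exact hvmem.1
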